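/- Let an extended N-series $G_*$ act on an extended N-series $K_*$. For each $m\geq 1$ and $g\in G_m$, the map $\tau_m(g)_0:K_0/K_1\to K_m/K_{m+1}$ defined by $\tau_m(g)_0(aK_1)=[g,a]K_{m+1}$ is a well-defined 1-cocycle: $\tau_m(g)_0(ab)=\tau_m(g)_0(a)+{}^a(\tau_m(g)_0(b))$ for all $a,b\in K_0$, where ${}^a$ denotes the action of $aK_1$ induced by conjugation. -/

import Mathlib

open scoped commutatorElement

/-- Let an extended N-series `G_*` act on an extended N-series `K_*`.  For `m ≥ 1`
and `g ∈ Gₘ`, the map `τₘ(g)₀ : K₀/K₁ → Kₘ/K_{m+1}`, `aK₁ ↦ [g,a]K_{m+1}`, is a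
well-defined 1-cocycle: `τₘ(g)₀(ab) = τₘ(g)₀(a) + ᵃ(τₘ(g)₀(b))`, where `[g,a] = g(a)a⁻¹`
and `ᵃ` is the conjugation action.  All identities are congruences mod `K_{m+1}`. -/
theorem johnson_tau_zero_cocycle {G K : Type*} [Group G] [Group K]
    (φ : G →* MulAut K) (Kf : ℕ → Subgroup K)
    (hK0 : Kf 0 = ⊤) (hdesc : ∀ i, Kf (i + 1) ≤ Kf i)
    (hcomm : ∀ i j, ⁅Kf i, Kf j⁆ ≤ Kf (i + j))
    (G' : ℕ → Subgroup G)
    (hG'0 : G' 0 = ⊤) (hG'desc : ∀ i, G' (i + 1) ≤ G' i)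
    (hG'comm : ∀ i j, ⁅G' i, G' j⁆ ≤ G' (i + j))
    (hact : ∀ m n, ∀ g ∈ G' m, ∀ k ∈ Kf n, φ g k * k⁻¹ ∈ Kf (m + n)) :
    ∀ m, 1 ≤ m → ∀ g ∈ G' m,
      -- the values `[g,a]` lie in `Kₘ`
      (∀ a : K, φ g a * a⁻¹ ∈ Kf m) ∧
      -- well-definedness: `aK₁ = a'K₁` implies `[g,a]K_{m+1} = [g,a']K_{m+1}`
      (∀ a a' : K, a⁻¹ * a' ∈ Kf 1 →
        (φ g a * a⁻¹)⁻¹ * (φ g a' * a'⁻¹) ∈ Kf (m + 1)) ∧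
      -- the 1-cocycle identity `τₘ(g)₀(ab) = τₘ(g)₀(a) + ᵃ(τₘ(g)₀(b))`
      (∀ a b : K,
        (φ g (a * b) * (a * b)⁻¹)⁻¹ *
          ((φ g a * a⁻¹) * (a * (φ g b * b⁻¹) * a⁻¹)) ∈ Kf (m + 1)) := by
  intro m hm g hg
  have hnorm : ∀ x ∈ Kf (m + 1), ∀ a : K, a * x * a⁻¹ ∈ Kf (m + 1) := by
    intro x hx a
    have h1 : ⁅a, x⁆ ∈ Kf (m + 1) := by
      have := hcomm 0 (m + 1)
      rw [zero_add] at this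
      exact this (Subgroup.commutator_mem_commutator (by rw [hK0]; trivial) hx)
    have : a * x * a⁻¹ = ⁅a, x⁆ * x := by group
    rw [this]; exact mul_mem h1 hx
  refine ⟨?_, ?_, ?_⟩
  · intro a
    have := hact m 0 g hg a (by rw [hK0]; trivial)
    rwa [add_zero] at this
  · intro a a' h
    have h1 : φ g (a⁻¹ * a') * (a⁻¹ * a')⁻¹ ∈ Kf (m + 1) := hact m 1 g hg _ h
    have h2 : (φ g a * a⁻¹)⁻¹ * (φ g a' * a'⁻¹)
        = a * (φ g (a⁻¹ * a') * (a⁻¹ * a')⁻¹) * a⁻¹ := by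
      simp only [map_mul, map_inv]; group
    rw [h2]; exact hnorm _ h1 a
  · intro a b
    have : (φ g (a * b) * (a * b)⁻¹)⁻¹ *
        ((φ g a * a⁻¹) * (a * (φ g b * b⁻¹) * a⁻¹)) = 1 := by
      simp only [map_mul]; group
    rw [this]; exact one_mem _
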